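/- Let f(x,y) = (x-100)·(x² + 3x(y-100) - 100y) / ((x+y-200)²·(x+y)) for 0 < x, y < 100. Then (x,y) = (100/3, 100/3) satisfies ∂f/∂x = 0 and ∂f/∂y = 0. -/

import Mathlib

theorem stmt_8 :
    let f : ℝ → ℝ → ℝ := fun x y =>
      (x - 100) * (x ^ 2 + 3 * x * (y - 100) - 100 * y) /
        ((x + y - 200) ^ 2 * (x + y))
    deriv (fun x => f x (100 / 3)) (100 / 3) = 0 ∧
      deriv (fun y => f (100 / 3) y) (100 / 3) = 0 := by
  intro f
  set c : ℝ := 100 / 3 with hc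
  constructor
  · have hA : HasDerivAt (fun x : ℝ => x - 100) 1 c := (hasDerivAt_id c).sub_const 100
    have hB : HasDerivAt (fun x : ℝ => x ^ 2 + 3 * x * (c - 100) - 100 * c)
        ((2 : ℕ) * c ^ 1 + 3 * 1 * (c - 100)) c := by
      exact ((hasDerivAt_pow 2 c).add
        (((hasDerivAt_id c).const_mul 3).mul_const (c - 100))).sub_const (100 * c)
    have hN : HasDerivAt (fun x : ℝ => (x - 100) * (x ^ 2 + 3 * x * (c - 100) - 100 * c))
        (1 * (c ^ 2 + 3 * c * (c - 100) - 100 * c) +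
          (c - 100) * ((2 : ℕ) * c ^ 1 + 3 * 1 * (c - 100))) c := hA.mul hB
    have hC : HasDerivAt (fun x : ℝ => (x + c - 200) ^ 2)
        ((2 : ℕ) * (c + c - 200) ^ 1 * 1) c :=
      (((hasDerivAt_id c).add_const c).sub_const 200).pow 2
    have hD : HasDerivAt (fun x : ℝ => (x + c - 200) ^ 2 * (x + c))
        ((2 : ℕ) * (c + c - 200) ^ 1 * 1 * (c + c) + (c + c - 200) ^ 2 * 1) c :=
      hC.mul ((hasDerivAt_id c).add_const c)
    have hD0 : (c + c - 200) ^ 2 * (c + c) ≠ 0 := by norm_num [hc]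
    have h := (hN.div hD hD0).deriv
    simp only [Pi.div_def] at h
    rw [show (fun x => f x c) = fun x =>
        (x - 100) * (x ^ 2 + 3 * x * (c - 100) - 100 * c) /
          ((x + c - 200) ^ 2 * (x + c)) from rfl, h]
    norm_num [hc]
  · have hA : HasDerivAt (fun y : ℝ => c ^ 2 + 3 * c * (y - 100) - 100 * y)
        (0 + 3 * c * 1 - 100 * 1) c := by
      exact ((hasDerivAt_const c (c ^ 2)).add
        (((hasDerivAt_id c).sub_const 100).const_mul (3 * c))).sub
        ((hasDerivAt_id c).const_mul 100)
    have hN : HasDerivAt (fun y : ℝ => (c - 100) * (c ^ 2 + 3 * c * (y - 100) - 100 * y))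
        ((c - 100) * (0 + 3 * c * 1 - 100 * 1)) c := hA.const_mul (c - 100)
    have hC : HasDerivAt (fun y : ℝ => (c + y - 200) ^ 2)
        ((2 : ℕ) * (c + c - 200) ^ 1 * 1) c :=
      (((hasDerivAt_id c).const_add c).sub_const 200).pow 2
    have hD : HasDerivAt (fun y : ℝ => (c + y - 200) ^ 2 * (c + y))
        ((2 : ℕ) * (c + c - 200) ^ 1 * 1 * (c + c) + (c + c - 200) ^ 2 * 1) c :=
      hC.mul ((hasDerivAt_id c).const_add c)
    have hD0 : (c + c - 200) ^ 2 * (c + c) ≠ 0 := by norm_num [hc]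
    have h := (hN.div hD hD0).deriv
    simp only [Pi.div_def] at h
    rw [show (fun y => f c y) = fun y =>
        (c - 100) * (c ^ 2 + 3 * c * (y - 100) - 100 * y) /
          ((c + y - 200) ^ 2 * (c + y)) from rfl, h]
    norm_num [hc]
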